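/- Let d ∈ ℝⁿ, ε > 0, ε̂ > 0, and κ ≥ 1. Then Σ_{i=1}^{n} d_i · (d_i/(‖d‖₂ + ε̂)) / (ε^κ + (|d_i|/(‖d‖₂ + ε̂))^κ)^{1/κ} ≥ ‖d‖₂² / ((1+ε)‖d‖₂ + ε̂ ε). Moreover, the function r(t) = t²/((ε+1)|t| + ε̂ε) is convex and 1-Lipschitz continuous on ℝ. -/

import Mathlib

open scoped BigOperators

lemma real_rpow_add_rpow_le_add {a b p : ℝ} (ha : 0 ≤ a) (hb : 0 ≤ b) (hp : 1 ≤ p) :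
    (a ^ p + b ^ p) ^ (1 / p) ≤ a + b := by
  have h := NNReal.rpow_add_rpow_le_add (⟨a, ha⟩ : NNReal) ⟨b, hb⟩ hp
  rw [← NNReal.coe_le_coe] at h
  exact Real.rpow_add_rpow_le_add ha hb hp

lemma g_mono {c b s t : ℝ} (hc : 0 < c) (hb : 0 < b) (hs : 0 ≤ s) (hst : s ≤ t) :
    s ^ 2 / (c * s + b) ≤ t ^ 2 / (c * t + b) := by
  have hps : 0 < c * s + b := by positivity
  have hpt : 0 < c * t + b := by nlinarith
  rw [div_le_div_iff₀ hps hpt]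
  nlinarith [mul_nonneg (mul_nonneg (mul_nonneg hc.le hs) (hs.trans hst)) (sub_nonneg.2 hst),
    mul_nonneg (mul_nonneg hb.le (sub_nonneg.2 hst)) (by linarith : (0:ℝ) ≤ t + s)]

lemma g_convex_ineq {c b x y a β : ℝ} (hc : 0 < c) (hb : 0 < b) (hx : 0 ≤ x) (hy : 0 ≤ y)
    (ha : 0 ≤ a) (hβ : 0 ≤ β) (hab : a + β = 1) :
    (a * x + β * y) ^ 2 / (c * (a * x + β * y) + b) ≤
      a * (x ^ 2 / (c * x + b)) + β * (y ^ 2 / (c * y + b)) := by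
  have hpx : 0 < c * x + b := by positivity
  have hpy : 0 < c * y + b := by positivity
  have hpz : 0 < c * (a * x + β * y) + b := by positivity
  have hβ' : β = 1 - a := by linarith
  subst hβ'
  rw [mul_div_assoc' a, mul_div_assoc', div_add_div _ _ (ne_of_gt hpx) (ne_of_gt hpy),
    div_le_div_iff₀ hpz (by positivity)]
  nlinarith [mul_nonneg (mul_nonneg ha hβ) (sq_nonneg (x * (c * y + b) - y * (c * x + b)))]

/-- Lower bound for the pre-normalized nonlinear preconditioner
`⟨d, ∇φ*(d/(‖d‖+ε̂))⟩ ≥ ‖d‖²/((1+ε)‖d‖ + ε̂ε)`, together with convexity and `1`-Lipschitz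
continuity of `r(t) = t²/((ε+1)|t| + ε̂ε)`. -/
theorem prenormalized_precond_bound {n : ℕ} (d : EuclideanSpace ℝ (Fin n))
    (ε εhat κ : ℝ) (hε : 0 < ε) (hεhat : 0 < εhat) (hκ : 1 ≤ κ) :
    (‖d‖ ^ 2 / ((1 + ε) * ‖d‖ + εhat * ε) ≤
      ∑ i : Fin n, d i * ((d i / (‖d‖ + εhat)) /
        (ε ^ κ + (|d i| / (‖d‖ + εhat)) ^ κ) ^ (1 / κ))) ∧
    ConvexOn ℝ Set.univ (fun t : ℝ => t ^ 2 / ((ε + 1) * |t| + εhat * ε)) ∧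
    LipschitzWith 1 (fun t : ℝ => t ^ 2 / ((ε + 1) * |t| + εhat * ε)) := by
  have hc : (0:ℝ) < ε + 1 := by linarith
  have hb : (0:ℝ) < εhat * ε := by positivity
  refine ⟨?_, ?_, ?_⟩
  · -- Part 1 : the sum bound
    have hN : (0:ℝ) < ‖d‖ + εhat := by positivity
    have hM : (0:ℝ) < (1 + ε) * ‖d‖ + εhat * ε := by positivity
    have hsum : ‖d‖ ^ 2 = ∑ j, (d j) ^ 2 := by
      rw [EuclideanSpace.norm_eq, Real.sq_sqrt (by positivity)]
      simp [Real.norm_eq_abs, sq_abs]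
    calc ‖d‖ ^ 2 / ((1 + ε) * ‖d‖ + εhat * ε)
        = ∑ i, (d i) ^ 2 / ((1 + ε) * ‖d‖ + εhat * ε) := by rw [hsum, Finset.sum_div]
      _ ≤ ∑ i : Fin n, d i * ((d i / (‖d‖ + εhat)) /
            (ε ^ κ + (|d i| / (‖d‖ + εhat)) ^ κ) ^ (1 / κ)) := by
          apply Finset.sum_le_sum
          intro i _
          have hdi : |d i| ≤ ‖d‖ := by
            have h1 : (d i) ^ 2 ≤ ‖d‖ ^ 2 := by
              rw [hsum]
              exact Finset.single_le_sum (f := fun j => (d j) ^ 2) (fun j _ => sq_nonneg _) (Finset.mem_univ i)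
            rw [← Real.sqrt_sq_eq_abs, ← Real.sqrt_sq (norm_nonneg d)]
            exact Real.sqrt_le_sqrt h1
          set D := (ε ^ κ + (|d i| / (‖d‖ + εhat)) ^ κ) ^ (1 / κ) with hD
          have hDpos : 0 < D := by
            apply Real.rpow_pos_of_pos
            have := Real.rpow_pos_of_pos hε κ
            have := Real.rpow_nonneg (by positivity : (0:ℝ) ≤ |d i| / (‖d‖ + εhat)) κ
            linarith
          have hDle : D ≤ ε + |d i| / (‖d‖ + εhat) :=
            real_rpow_add_rpow_le_add hε.le (by positivity) hκ
          have hND : (‖d‖ + εhat) * D ≤ (1 + ε) * ‖d‖ + εhat * ε := by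
            have h2 : (‖d‖ + εhat) * D ≤ (‖d‖ + εhat) * (ε + |d i| / (‖d‖ + εhat)) :=
              mul_le_mul_of_nonneg_left hDle hN.le
            have h3 : (‖d‖ + εhat) * (ε + |d i| / (‖d‖ + εhat)) = ε * (‖d‖ + εhat) + |d i| := by
              field_simp
            nlinarith
          have hterm : d i * ((d i / (‖d‖ + εhat)) / D) = (d i) ^ 2 / ((‖d‖ + εhat) * D) := by
            field_simp
          rw [hterm]
          rw [div_le_div_iff₀ hM (by positivity)]
          nlinarith [sq_nonneg (d i)]
  · -- Part 2 : convexity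
    refine ⟨convex_univ, fun x _ y _ a β ha hβ hab => ?_⟩
    simp only [smul_eq_mul]
    have habs : |a * x + β * y| ≤ a * |x| + β * |y| := by
      calc |a * x + β * y| ≤ |a * x| + |β * y| := abs_add_le _ _
        _ = a * |x| + β * |y| := by rw [abs_mul, abs_mul, abs_of_nonneg ha, abs_of_nonneg hβ]
    calc (a * x + β * y) ^ 2 / ((ε + 1) * |a * x + β * y| + εhat * ε)
        = |a * x + β * y| ^ 2 / ((ε + 1) * |a * x + β * y| + εhat * ε) := by rw [sq_abs]
      _ ≤ (a * |x| + β * |y|) ^ 2 / ((ε + 1) * (a * |x| + β * |y|) + εhat * ε) :=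
          g_mono hc hb (abs_nonneg _) habs
      _ ≤ a * (|x| ^ 2 / ((ε + 1) * |x| + εhat * ε)) +
            β * (|y| ^ 2 / ((ε + 1) * |y| + εhat * ε)) :=
          g_convex_ineq hc hb (abs_nonneg _) (abs_nonneg _) ha hβ hab
      _ = a * (x ^ 2 / ((ε + 1) * |x| + εhat * ε)) +
            β * (y ^ 2 / ((ε + 1) * |y| + εhat * ε)) := by rw [sq_abs, sq_abs]
  · -- Part 3 : 1-Lipschitz
    apply LipschitzWith.of_dist_le_mul
    intro x y
    simp only [Real.dist_eq, NNReal.coe_one, one_mul]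
    have hpx : 0 < (ε + 1) * |x| + εhat * ε := by positivity
    have hpy : 0 < (ε + 1) * |y| + εhat * ε := by positivity
    have hfd : x ^ 2 / ((ε + 1) * |x| + εhat * ε) - y ^ 2 / ((ε + 1) * |y| + εhat * ε) =
        ((|x| - |y|) * ((ε + 1) * (|x| * |y|) + εhat * ε * (|x| + |y|))) /
          (((ε + 1) * |x| + εhat * ε) * ((ε + 1) * |y| + εhat * ε)) := by
      rw [div_sub_div _ _ hpx.ne' hpy.ne']
      congr 1
      rw [← sq_abs x, ← sq_abs y]; ring
    have hBnn : 0 ≤ (ε + 1) * (|x| * |y|) + εhat * ε * (|x| + |y|) := by positivity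
    rw [hfd, abs_div, abs_mul, abs_of_nonneg hBnn, abs_of_pos (mul_pos hpx hpy)]
    rw [div_le_iff₀ (by positivity)]
    have h1 : abs (|x| - |y|) ≤ |x - y| := abs_abs_sub_abs_le_abs_sub x y
    have hB : (ε + 1) * (|x| * |y|) + εhat * ε * (|x| + |y|) ≤
        ((ε + 1) * |x| + εhat * ε) * ((ε + 1) * |y| + εhat * ε) := by
      nlinarith [abs_nonneg x, abs_nonneg y, mul_nonneg (abs_nonneg x) (abs_nonneg y),
        mul_nonneg hε.le (mul_nonneg (abs_nonneg x) (abs_nonneg y)),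
        mul_nonneg (mul_nonneg hεhat.le hε.le) (abs_nonneg x),
        mul_nonneg (mul_nonneg hεhat.le hε.le) (abs_nonneg y)]
    calc abs (|x| - |y|) * ((ε + 1) * (|x| * |y|) + εhat * ε * (|x| + |y|))
        ≤ |x - y| * (((ε + 1) * |x| + εhat * ε) * ((ε + 1) * |y| + εhat * ε)) :=
          mul_le_mul h1 hB hBnn (abs_nonneg _)
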